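/- arXiv:2203.01031 — 5 statements merged into one kernel-verified Lean document; each statement's English description precedes it below -/
import Mathlib

section
/- Let W ⊆ V be an isotropic subspace with ordered basis (w₁,…,w_r) and set ω = ι(w₁)⋯ι(w_r) ∈ Cl(q). Then the kernel of the right-multiplication map Cl(q) → Cl(q), x ↦ x·ω, is exactly the k-linear span of {x·ι(w) : x ∈ Cl(q), w ∈ W}. In particular, right multiplication by ω induces a k-linear isomorphism from Cl(q)/span_k{x·ι(w) : x ∈ Cl(q), w ∈ W} onto the left Clifford ideal Cl(q)·ω. (This is the fiberwise form of Lemma 2.4: exactness of B_{n−1}⊗W → B_n → I_{n+r}^W ⊗ det(W)^∨ → 0.) -/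
open CliffordAlgebra

section Aux

variable {k V : Type*} [Field k] [AddCommGroup V] [Module k V] (Q : QuadraticForm k V)

/-- If `v` is isotropic, occurs in `l`, and has zero polar product with everything in `l`,
then `ι v` annihilates the product of `ι` over `l`. -/
lemma aux_iota_mul_prod_eq_zero :
    ∀ (l : List V) (v : V), Q v = 0 → (∀ u ∈ l, QuadraticMap.polar Q v u = 0) → v ∈ l →
      ι Q v * (l.map (ι Q)).prod = 0 := by
  intro l
  induction l with
  | nil => simp
  | cons u t ih =>
    intro v hv hpol hmem
    rw [List.map_cons, List.prod_cons, ← mul_assoc]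
    rcases List.mem_cons.mp hmem with h | h
    · subst h
      rw [ι_sq_scalar, hv, map_zero, zero_mul]
    · have hc : ι Q v * ι Q u = - (ι Q u * ι Q v) := by
        have h2 := ι_mul_ι_add_swap (Q := Q) v u
        rw [hpol u (List.mem_cons_self), map_zero] at h2
        exact eq_neg_of_add_eq_zero_left h2
      rw [hc, neg_mul, mul_assoc,
        ih v hv (fun x hx => hpol x (List.mem_cons_of_mem _ hx)) h, mul_zero, neg_zero]

/-- Key induction: if `x` times the product of `ι` over the vectors of `l` vanishes,
and each vector in `l` comes with a dual functional that is `1` on it and `0` on later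
vectors, then `x` lies in the span of right multiples by the `ι`'s of vectors of `l`. -/
lemma aux_mem_span_of_mul_prod_eq_zero :
    ∀ (l : List (V × Module.Dual k V)),
      (∀ p ∈ l, p.2 p.1 = 1) →
      l.Pairwise (fun p q => p.2 q.1 = 0) →
      ∀ x : CliffordAlgebra Q, x * (l.map (fun p => ι Q p.1)).prod = 0 →
        x ∈ Submodule.span k {y | ∃ z : CliffordAlgebra Q, ∃ p ∈ l, y = z * ι Q p.1} := by
  intro l
  induction l with
  | nil =>
    intro _ _ x hx
    simp only [List.map_nil, List.prod_nil, mul_one] at hx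
    simp [hx]
  | cons p t ih =>
    intro hone hpair x hx
    obtain ⟨v, φ⟩ := p
    rw [List.map_cons, List.prod_cons, ← mul_assoc] at hx
    have hpt := (List.pairwise_cons.mp hpair).2
    have hφt : ∀ q ∈ t, φ q.1 = 0 := (List.pairwise_cons.mp hpair).1
    have hy : x * ι Q v ∈ Submodule.span k
        {y | ∃ z : CliffordAlgebra Q, ∃ q ∈ t, y = z * ι Q q.1} :=
      ih (fun q hq => hone q (List.mem_cons_of_mem _ hq)) hpt _ hx
    -- the bigger span
    set S : Set (CliffordAlgebra Q) :=
      {y | ∃ z : CliffordAlgebra Q, ∃ q ∈ ((v, φ) :: t), y = z * ι Q q.1} with hS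
    -- contraction of the small span lands in the big span
    have hcontr : ∀ y ∈ Submodule.span k
        {y | ∃ z : CliffordAlgebra Q, ∃ q ∈ t, y = z * ι Q q.1},
        contractRight y φ ∈ Submodule.span k S := by
      intro y hy
      induction hy using Submodule.span_induction with
      | mem y hy =>
        obtain ⟨z, q, hq, rfl⟩ := hy
        rw [contractRight_mul_ι, hφt q hq, zero_smul, zero_sub, neg_mem_iff]
        exact Submodule.subset_span ⟨contractRight z φ, q, List.mem_cons_of_mem _ hq, rfl⟩
      | zero => simp
      | add a b _ _ ha hb => rw [map_add]; exact Submodule.add_mem _ ha hb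
      | smul c a _ ha => rw [map_smul]; exact Submodule.smul_mem _ _ ha
    have key : x = contractRight (x * ι Q v) φ + contractRight x φ * ι Q v := by
      rw [contractRight_mul_ι, hone (v, φ) (List.mem_cons_self), one_smul]
      abel
    rw [key]
    refine Submodule.add_mem _ (hcontr _ hy) ?_
    exact Submodule.subset_span ⟨contractRight x φ, (v, φ), List.mem_cons_self, rfl⟩

end Aux

/-- For an isotropic subspace `W ⊆ V` with ordered basis `w₁, …, w_r` and
`ω = ι w₁ ⋯ ι w_r`, the kernel of right multiplication by `ω` on `Cl(q)` is exactly the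
`k`-span of `{x · ι w : x ∈ Cl(q), w ∈ W}`; its range is the left Clifford ideal
`Cl(q)·ω`, so right multiplication by `ω` induces a `k`-linear isomorphism from the
quotient onto `Cl(q)·ω`. -/
theorem clifford_rightMul_ker_span_of_isotropic
    {k V : Type*} [Field k] [Invertible (2 : k)]
    [AddCommGroup V] [Module k V] [FiniteDimensional k V]
    (Q : QuadraticForm k V) (W : Submodule k V)
    (hiso : ∀ v ∈ W, Q v = 0)
    (r : ℕ) (w : Fin r → V)
    (hli : LinearIndependent k w)
    (hspan : Submodule.span k (Set.range w) = W)
    (ω : CliffordAlgebra Q)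
    (hω : ω = (List.ofFn fun i => ι Q (w i)).prod) :
    LinearMap.ker (LinearMap.mulRight k ω) =
      Submodule.span k {y | ∃ x : CliffordAlgebra Q, ∃ v ∈ W, y = x * ι Q v} ∧
    LinearMap.range (LinearMap.mulRight k ω) =
      Submodule.span k {y | ∃ x : CliffordAlgebra Q, y = x * ω} ∧
    Nonempty ((CliffordAlgebra Q ⧸
        Submodule.span k {y | ∃ x : CliffordAlgebra Q, ∃ v ∈ W, y = x * ι Q v}) ≃ₗ[k]
      ↥(Submodule.span k {y | ∃ x : CliffordAlgebra Q, y = x * ω})) := by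
  have hw : ∀ i, w i ∈ W := fun i => hspan ▸ Submodule.subset_span ⟨i, rfl⟩
  -- dual functionals
  have hw' : ∀ i, (W.subtype ∘ fun i => (⟨w i, hw i⟩ : W)) i = w i := fun i => rfl
  have hli' : LinearIndependent k (fun i => (⟨w i, hw i⟩ : W)) := by
    apply LinearIndependent.of_comp W.subtype
    convert hli
    rfl
  have hspan' : Submodule.span k (Set.range fun i => (⟨w i, hw i⟩ : W)) = ⊤ := by
    apply Submodule.map_injective_of_injective W.injective_subtype
    have himg : (⇑W.subtype '' Set.range fun i => (⟨w i, hw i⟩ : W)) = Set.range w := by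
      ext v
      simp only [Set.mem_image, Set.mem_range]
      constructor
      · rintro ⟨_, ⟨i, rfl⟩, rfl⟩; exact ⟨i, rfl⟩
      · rintro ⟨i, rfl⟩; exact ⟨⟨w i, hw i⟩, ⟨i, rfl⟩, rfl⟩
    rw [Submodule.map_span, himg, hspan, Submodule.map_top, Submodule.range_subtype]
  let bW : Module.Basis (Fin r) k W := Module.Basis.mk hli' (by rw [hspan'])
  obtain ⟨U, hU⟩ := Submodule.exists_isCompl W
  let proj : V →ₗ[k] W := W.linearProjOfIsCompl U hU
  let φ : Fin r → Module.Dual k V := fun i => (bW.coord i).comp proj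
  have hproj : ∀ j, proj (w j) = ⟨w j, hw j⟩ := fun j =>
    Submodule.linearProjOfIsCompl_apply_left hU ⟨w j, hw j⟩
  have hφ : ∀ i j, φ i (w j) = if j = i then 1 else 0 := by
    intro i j
    show bW.coord i (proj (w j)) = _
    rw [hproj]
    have : (⟨w j, hw j⟩ : W) = bW j := (Module.Basis.mk_apply hli' _ j).symm
    rw [this, Module.Basis.coord_apply, Module.Basis.repr_self, Finsupp.single_apply]
  -- product shape
  have hprod : ((List.ofFn w).map (ι Q)).prod = ω := by
    rw [hω, List.map_ofFn]; rfl
  -- ι v * ω = 0 for v ∈ W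
  have hιω : ∀ v ∈ W, ι Q v * ω = 0 := by
    have hWle : W ≤ LinearMap.ker ((LinearMap.mulRight k ω).comp (ι Q)) := by
      rw [← hspan, Submodule.span_le]
      rintro _ ⟨i, rfl⟩
      rw [SetLike.mem_coe, LinearMap.mem_ker, LinearMap.comp_apply,
        LinearMap.mulRight_apply, ← hprod]
      apply aux_iota_mul_prod_eq_zero Q (List.ofFn w) (w i) (hiso _ (hw i))
      · intro u hu
        obtain ⟨j, rfl⟩ := List.mem_ofFn.mp hu
        have h1 : Q (w i + w j) = 0 := hiso _ (add_mem (hw i) (hw j))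
        simp [QuadraticMap.polar, h1, hiso _ (hw i), hiso _ (hw j)]
      · exact List.mem_ofFn.mpr ⟨i, rfl⟩
    intro v hv
    exact hWle hv
  -- kernel = span
  have hker : LinearMap.ker (LinearMap.mulRight k ω) =
      Submodule.span k {y | ∃ x : CliffordAlgebra Q, ∃ v ∈ W, y = x * ι Q v} := by
    apply le_antisymm
    · -- hard direction
      intro x hx
      rw [LinearMap.mem_ker, LinearMap.mulRight_apply] at hx
      have hx' : x * ((List.ofFn fun i => (w i, φ i)).map
          (fun p => ι Q p.1)).prod = 0 := by
        rw [List.map_ofFn]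
        show x * (List.ofFn fun i => ι Q (w i)).prod = 0
        rw [← hω]; exact hx
      have hmem := aux_mem_span_of_mul_prod_eq_zero Q
        (List.ofFn fun i => (w i, φ i))
        (by
          intro p hp
          obtain ⟨i, rfl⟩ := List.mem_ofFn.mp hp
          simpa using hφ i i)
        (by
          rw [List.pairwise_ofFn]
          intro i j hij
          simpa [hij.ne'] using hφ i j)
        x hx'
      refine Submodule.span_mono ?_ hmem
      rintro _ ⟨z, p, hp, rfl⟩
      obtain ⟨i, rfl⟩ := List.mem_ofFn.mp hp
      exact ⟨z, w i, hw i, rfl⟩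
    · rw [Submodule.span_le]
      rintro _ ⟨x, v, hv, rfl⟩
      rw [SetLike.mem_coe, LinearMap.mem_ker, LinearMap.mulRight_apply,
        mul_assoc, hιω v hv, mul_zero]
  have hrange : LinearMap.range (LinearMap.mulRight k ω) =
      Submodule.span k {y | ∃ x : CliffordAlgebra Q, y = x * ω} := by
    apply le_antisymm
    · rintro _ ⟨x, rfl⟩
      exact Submodule.subset_span ⟨x, rfl⟩
    · rw [Submodule.span_le]
      rintro _ ⟨x, rfl⟩
      exact ⟨x, rfl⟩
  refine ⟨hker, hrange, ?_⟩
  rw [← hker, ← hrange]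
  exact ⟨LinearMap.quotKerEquivRange _⟩
end

section
/- Let W ⊆ V be an isotropic subspace with ordered basis (w₁,…,w_r) and set ω = ι(w₁)⋯ι(w_r) ∈ Cl(q). Then the kernel of the left-multiplication map Cl(q) → Cl(q), x ↦ ω·x, is exactly the k-linear span of {ι(w)·x : w ∈ W, x ∈ Cl(q)}. In particular, left multiplication by ω induces a k-linear isomorphism from Cl(q)/span_k{ι(w)·x : w ∈ W, x ∈ Cl(q)} onto the right Clifford ideal ω·Cl(q). (This is the fiberwise form of the right-ideal version of Lemma 2.4.) -/
open CliffordAlgebra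

section Aux

variable {k V : Type*} [Field k] [AddCommGroup V] [Module k V]
variable (Q : QuadraticForm k V)

private lemma aux_prod_mul_ι (l : List V) (v : V)
    (h1 : ∀ a ∈ l, ι Q a * ι Q v = - (ι Q v * ι Q a)) :
    (l.map (ι Q)).prod * ι Q v
      = ((-1 : k) ^ l.length) • (ι Q v * (l.map (ι Q)).prod) := by
  induction l with
  | nil => simp
  | cons a t ih =>
    have ha := h1 a List.mem_cons_self
    have ih' := ih (fun b hb => h1 b (List.mem_cons_of_mem _ hb))
    simp only [List.map_cons, List.prod_cons, List.length_cons]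
    calc (ι Q a * (t.map (ι Q)).prod) * ι Q v
        = ι Q a * ((t.map (ι Q)).prod * ι Q v) := by rw [mul_assoc]
      _ = ι Q a * (((-1 : k) ^ t.length) • (ι Q v * (t.map (ι Q)).prod)) := by
          rw [ih']
      _ = ((-1 : k) ^ t.length) • (ι Q a * ι Q v * (t.map (ι Q)).prod) := by
          rw [mul_smul_comm, mul_assoc]
      _ = ((-1 : k) ^ t.length) • ((- (ι Q v * ι Q a)) * (t.map (ι Q)).prod) := by
          rw [ha]
      _ = ((-1 : k) ^ (t.length + 1)) • (ι Q v * (ι Q a * (t.map (ι Q)).prod)) := by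
          rw [neg_mul, mul_assoc, smul_neg, pow_succ, mul_neg_one, neg_smul]

private lemma aux_prod_mul_self (l : List V) (v : V)
    (h1 : ∀ a ∈ l, ι Q a * ι Q v = - (ι Q v * ι Q a)) (h2 : Q v = 0)
    (hv : v ∈ l) : (l.map (ι Q)).prod * ι Q v = 0 := by
  induction l with
  | nil => simp at hv
  | cons a t ih =>
    simp only [List.map_cons, List.prod_cons]
    rcases List.mem_cons.mp hv with h | h
    · subst h
      rw [mul_assoc, aux_prod_mul_ι Q t v (fun b hb => h1 b (List.mem_cons_of_mem _ hb)),
        mul_smul_comm, ← mul_assoc, ι_sq_scalar, h2, map_zero, zero_mul, smul_zero]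
    · rw [mul_assoc, ih (fun b hb => h1 b (List.mem_cons_of_mem _ hb)) h, mul_zero]

end Aux

/-- For an isotropic subspace `W ⊆ V` with ordered basis `w₁, …, w_r` and
`ω = ι w₁ ⋯ ι w_r`, the kernel of left multiplication by `ω` on `Cl(q)` is exactly the
`k`-span of `{ι w · x : w ∈ W, x ∈ Cl(q)}`; its range is the right Clifford ideal
`ω·Cl(q)`, so left multiplication by `ω` induces a `k`-linear isomorphism from the
quotient onto `ω·Cl(q)`. -/
theorem clifford_leftMul_ker_span_of_isotropic
    {k V : Type*} [Field k] [Invertible (2 : k)]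
    [AddCommGroup V] [Module k V] [FiniteDimensional k V]
    (Q : QuadraticForm k V) (W : Submodule k V)
    (hiso : ∀ v ∈ W, Q v = 0)
    (r : ℕ) (w : Fin r → V)
    (hli : LinearIndependent k w)
    (hspan : Submodule.span k (Set.range w) = W)
    (ω : CliffordAlgebra Q)
    (hω : ω = (List.ofFn fun i => ι Q (w i)).prod) :
    LinearMap.ker (LinearMap.mulLeft k ω) =
      Submodule.span k {y | ∃ v ∈ W, ∃ x : CliffordAlgebra Q, y = ι Q v * x} ∧
    LinearMap.range (LinearMap.mulLeft k ω) =
      Submodule.span k {y | ∃ x : CliffordAlgebra Q, y = ω * x} ∧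
    Nonempty ((CliffordAlgebra Q ⧸
        Submodule.span k {y | ∃ v ∈ W, ∃ x : CliffordAlgebra Q, y = ι Q v * x}) ≃ₗ[k]
      ↥(Submodule.span k {y | ∃ x : CliffordAlgebra Q, y = ω * x})) := by
  set S : Submodule k (CliffordAlgebra Q) :=
    Submodule.span k {y | ∃ v ∈ W, ∃ x : CliffordAlgebra Q, y = ι Q v * x} with hS
  -- membership of the `w i` in `W`
  have hwW : ∀ i, w i ∈ W := fun i => hspan ▸ Submodule.subset_span ⟨i, rfl⟩
  -- anticommutation within `W`
  have hanti : ∀ a ∈ W, ∀ b ∈ W, ι Q a * ι Q b = - (ι Q b * ι Q a) := by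
    intro a ha b hb
    have hpol : QuadraticMap.polar Q a b = 0 := by
      simp [QuadraticMap.polar, hiso _ ha, hiso _ hb, hiso _ (W.add_mem ha hb)]
    have := ι_mul_ι_add_swap (Q := Q) a b
    rw [hpol, map_zero] at this
    exact eq_neg_of_add_eq_zero_left this
  -- ω kills ι of elements of W on the right
  have hωw : ∀ i : Fin r, ω * ι Q (w i) = 0 := by
    intro i
    rw [hω]
    have : (List.ofFn fun i => ι Q (w i)) = (List.ofFn w).map (ι Q) := by
      rw [List.map_ofFn]; rfl
    rw [this]
    refine aux_prod_mul_self Q (List.ofFn w) (w i) ?_ (hiso _ (hwW i)) ?_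
    · intro a ha
      obtain ⟨j, rfl⟩ := List.mem_ofFn.mp ha
      exact hanti _ (hwW j) _ (hwW i)
    · exact List.mem_ofFn.mpr ⟨i, rfl⟩
  have hωv : ∀ v ∈ W, ω * ι Q v = 0 := by
    have : W ≤ LinearMap.ker ((LinearMap.mulLeft k ω).comp (ι Q)) := by
      rw [← hspan, Submodule.span_le]
      rintro _ ⟨i, rfl⟩
      simpa using hωw i
    intro v hv
    simpa using this hv
  -- Part 1 ⊇
  have hSker : S ≤ LinearMap.ker (LinearMap.mulLeft k ω) := by
    rw [hS, Submodule.span_le]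
    rintro _ ⟨v, hv, x, rfl⟩
    simp only [SetLike.mem_coe, LinearMap.mem_ker, LinearMap.mulLeft_apply]
    rw [← mul_assoc, hωv v hv, zero_mul]
  -- Part 1 ⊆ : contraction argument
  -- dual functionals
  obtain ⟨C, hC⟩ := Submodule.exists_isCompl W
  set π := W.projectionOnto C hC with hπ
  let b : Module.Basis (Fin r) k W := (Module.Basis.span hli).map (LinearEquiv.ofEq _ _ hspan)
  have hb : ∀ i, (b i : V) = w i := by
    intro i
    simp only [b, Module.Basis.map_apply]
    simp [Module.Basis.span_apply hli i]
  let d : Fin r → Module.Dual k V := fun i => (b.coord i).comp (π : V →ₗ[k] W)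
  have hd : ∀ i j : Fin r, d i (w j) = if j = i then 1 else 0 := by
    intro i j
    have h1 : π (w j) = ⟨w j, hwW j⟩ := by
      have := Submodule.linearProjOfIsCompl_apply_left hC ⟨w j, hwW j⟩
      simpa [hπ] using this
    have h2 : (⟨w j, hwW j⟩ : W) = b j := by
      apply Subtype.ext
      simp [hb]
    simp only [d, LinearMap.comp_apply, h1, h2, Module.Basis.coord_apply, Module.Basis.repr_self]
    exact Finsupp.single_apply
  -- tails and partial spans
  set tl : ℕ → CliffordAlgebra Q :=
    fun j => ((List.ofFn fun i => ι Q (w i)).drop j).prod with htl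
  set Sp : ℕ → Submodule k (CliffordAlgebra Q) := fun j =>
    Submodule.span k
      {y | ∃ i : Fin r, (i : ℕ) < j ∧ ∃ x : CliffordAlgebra Q, y = ι Q (w i) * x} with hSp
  have hlen : (List.ofFn fun i => ι Q (w i)).length = r := by simp
  have htl_succ : ∀ j : ℕ, (hj : j < r) → tl j = ι Q (w ⟨j, hj⟩) * tl (j + 1) := by
    intro j hj
    rw [htl]
    simp only
    rw [List.drop_eq_getElem_cons (by omega), List.prod_cons]
    congr 1
    simp
  have htlr : tl r = 1 := by
    rw [htl]
    simp only
    rw [List.drop_eq_nil_of_le (by simp), List.prod_nil]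
  have hkerS : LinearMap.ker (LinearMap.mulLeft k ω) ≤ S := by
    intro x hx
    have hx0 : ω * x = 0 := by simpa using hx
    have key : ∀ j, j ≤ r → tl j * x ∈ Sp j := by
      intro j
      induction j with
      | zero =>
        intro _
        have : tl 0 = ω := by rw [htl, hω]; simp
        rw [this, hx0]
        exact Submodule.zero_mem _
      | succ j ih =>
        intro hj1
        have hj : j < r := by omega
        have hmem := ih (by omega)
        set j' : Fin r := ⟨j, hj⟩ with hj'
        set D : CliffordAlgebra Q →ₗ[k] CliffordAlgebra Q := contractLeft (d j') with hD
        -- D maps Sp j into Sp (j+1)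
        have hDS : ∀ y ∈ Sp j, D y ∈ Sp (j + 1) := by
          intro y hy
          have : Sp j ≤ Submodule.comap D (Sp (j + 1)) := by
            rw [hSp, Submodule.span_le]
            rintro _ ⟨i, hij, x', rfl⟩
            simp only [SetLike.mem_coe, Submodule.mem_comap, hD]
            rw [contractLeft_ι_mul]
            have : d j' (w i) = 0 := by
              rw [hd]
              simp [Fin.ext_iff, hj']
              omega
            rw [this, zero_smul, zero_sub]
            refine neg_mem (Submodule.subset_span ?_)
            exact ⟨i, by omega, _, rfl⟩
          exact this hy
        -- decompose
        have hdec : tl j * x = ι Q (w j') * (tl (j + 1) * x) := by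
          rw [htl_succ j hj, mul_assoc]
        have hcontr : D (tl j * x)
            = tl (j + 1) * x - ι Q (w j') * D (tl (j + 1) * x) := by
          rw [hdec, hD, contractLeft_ι_mul]
          rw [hd]
          simp
        have h1 : tl (j + 1) * x
            = D (tl j * x) + ι Q (w j') * D (tl (j + 1) * x) := by
          rw [hcontr]; abel
        rw [h1]
        refine Submodule.add_mem _ (hDS _ hmem) (Submodule.subset_span ?_)
        exact ⟨j', by simp [hj'], _, rfl⟩
    have hx' : x ∈ Sp r := by
      have := key r le_rfl
      rwa [htlr, one_mul] at this
    have : Sp r ≤ S := by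
      rw [hSp, hS, Submodule.span_le]
      rintro _ ⟨i, _, x', rfl⟩
      exact Submodule.subset_span ⟨w i, hwW i, x', rfl⟩
    exact this hx'
  have h1 : LinearMap.ker (LinearMap.mulLeft k ω) = S := le_antisymm hkerS hSker
  have h2 : LinearMap.range (LinearMap.mulLeft k ω)
      = Submodule.span k {y | ∃ x : CliffordAlgebra Q, y = ω * x} := by
    apply le_antisymm
    · rintro _ ⟨x, rfl⟩
      exact Submodule.subset_span ⟨x, by simp⟩
    · rw [Submodule.span_le]
      rintro _ ⟨x, rfl⟩
      exact ⟨x, by simp⟩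
  refine ⟨h1, h2, ⟨?_⟩⟩
  exact (Submodule.quotEquivOfEq _ _ h1.symm).trans
    ((LinearMap.quotKerEquivRange _).trans (LinearEquiv.ofEq _ _ h2))
end

section
/- Let W ⊆ V be an isotropic subspace of dimension r ≥ 1 and W' ⊂ W a subspace of dimension r−1. Choose a basis (w₁,…,w_r) of W such that (w₁,…,w_{r−1}) is a basis of W', and set ω' = ι(w₁)⋯ι(w_{r−1}) and ω = ω'·ι(w_r) = ι(w₁)⋯ι(w_r). Then right multiplication by ι(w_r) maps the left Clifford ideal Cl(q)·ω' onto Cl(q)·ω, and its kernel on Cl(q)·ω' is exactly Cl(q)·ω; that is, {x ∈ Cl(q)·ω' : x·ι(w_r) = 0} = Cl(q)·ω, so there is a short exact sequence 0 → Cl(q)·ω → Cl(q)·ω' → Cl(q)·ω → 0 in which the second map is right multiplication by ι(w_r). (This is the fiberwise form of Lemma 2.5 for left Clifford ideals.) -/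
open CliffordAlgebra

private lemma clifford_aux_anticomm {k V : Type*} [CommRing k] [AddCommGroup V] [Module k V]
    (Q : QuadraticForm k V) (v : V) :
    ∀ (L : List V), (∀ u ∈ L, Q.IsOrtho u v) →
      (L.map (ι Q)).prod * ι Q v = ((-1 : k) ^ L.length) • (ι Q v * (L.map (ι Q)).prod)
  | [], _ => by simp
  | u :: L, h => by
    have ih := clifford_aux_anticomm Q v L (fun x hx => h x (List.mem_cons_of_mem _ hx))
    have hc := ι_mul_ι_comm_of_isOrtho (Q := Q) (h u List.mem_cons_self)
    simp only [List.map_cons, List.prod_cons, List.length_cons, mul_assoc, ih,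
      mul_smul_comm, pow_succ]
    rw [← mul_assoc, hc]
    simp [mul_assoc, mul_smul_comm, smul_smul]

private lemma clifford_aux_contract {k V : Type*} [CommRing k] [Invertible (2:k)]
    [AddCommGroup V] [Module k V]
    (Q : QuadraticForm k V) (d : Module.Dual k V) (L : List V)
    (h : ∀ u ∈ L, d u = 0) (b : CliffordAlgebra Q) :
    contractRight (b * (L.map (ι Q)).prod) d
      = ((-1 : k) ^ L.length) • (contractRight b d * (L.map (ι Q)).prod) := by
  induction L using List.reverseRecOn generalizing b with
  | nil => simp
  | append_singleton L a ih =>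
    have ha : d a = 0 := h a (by simp)
    have hL : ∀ u ∈ L, d u = 0 := fun u hu => h u (by simp [hu])
    simp only [List.map_append, List.prod_append, List.map_cons, List.map_nil,
      List.prod_cons, List.prod_nil, mul_one, List.length_append, List.length_cons,
      List.length_nil, ← mul_assoc]
    rw [contractRight_mul_ι, ih hL, ha, zero_smul, zero_sub,
      smul_mul_assoc, pow_succ]
    simp [smul_smul, mul_comm]

/-- Let `W` be an isotropic subspace with basis `w₁, …, w_{r+1}` and let
`W'` be the span of `w₁, …, w_r`. With `ω' = ι w₁ ⋯ ι w_r` and `ω = ω' · ι w_{r+1}`,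
right multiplication by `ι w_{r+1}` maps the left Clifford ideal `Cl(q)·ω'` onto
`Cl(q)·ω`, and its kernel on `Cl(q)·ω'` is exactly `Cl(q)·ω`; i.e. there is a short
exact sequence `0 → Cl(q)·ω → Cl(q)·ω' → Cl(q)·ω → 0` whose second map is right
multiplication by `ι w_{r+1}`. -/
theorem clifford_left_ideal_ses_of_corank_one
    {k V : Type*} [Field k] [Invertible (2 : k)]
    [AddCommGroup V] [Module k V] [FiniteDimensional k V]
    (Q : QuadraticForm k V) (W W' : Submodule k V)
    (hiso : ∀ v ∈ W, Q v = 0)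
    (r : ℕ) (w : Fin (r + 1) → V)
    (hli : LinearIndependent k w)
    (hspan : Submodule.span k (Set.range w) = W)
    (hspan' : Submodule.span k (Set.range fun i : Fin r => w i.castSucc) = W')
    (ω' ω : CliffordAlgebra Q)
    (hω' : ω' = (List.ofFn fun i : Fin r => ι Q (w i.castSucc)).prod)
    (hω : ω = ω' * ι Q (w (Fin.last r))) :
    Submodule.map (LinearMap.mulRight k (ι Q (w (Fin.last r))))
        (Submodule.span k {y | ∃ x : CliffordAlgebra Q, y = x * ω'}) =
      Submodule.span k {y | ∃ x : CliffordAlgebra Q, y = x * ω} ∧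
    Submodule.span k {y | ∃ x : CliffordAlgebra Q, y = x * ω'} ⊓
        LinearMap.ker (LinearMap.mulRight k (ι Q (w (Fin.last r)))) =
      Submodule.span k {y | ∃ x : CliffordAlgebra Q, y = x * ω} := by
  set e : CliffordAlgebra Q := ι Q (w (Fin.last r)) with he
  -- all w i lie in W
  have hwW : ∀ i, w i ∈ W := fun i => hspan ▸ Submodule.subset_span ⟨i, rfl⟩
  have hQlast : Q (w (Fin.last r)) = 0 := hiso _ (hwW _)
  have hee : e * e = 0 := by rw [he, ι_sq_scalar, hQlast, map_zero]
  -- rewrite ω' as a product over a list of vectors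
  set L : List V := List.ofFn (fun i : Fin r => w i.castSucc) with hL
  have hω'' : ω' = (L.map (ι Q)).prod := by
    rw [hω', hL, List.map_ofFn]; rfl
  have hLlen : L.length = r := by simp [hL]
  have hLmem : ∀ u ∈ L, ∃ i : Fin r, u = w i.castSucc := by
    intro u hu
    rw [hL, List.mem_ofFn] at hu
    obtain ⟨i, rfl⟩ := hu
    exact ⟨i, rfl⟩
  -- orthogonality
  have hortho : ∀ u ∈ L, Q.IsOrtho u (w (Fin.last r)) := by
    intro u hu
    obtain ⟨i, rfl⟩ := hLmem u hu
    have h1 : Q (w i.castSucc) = 0 := hiso _ (hwW _)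
    have h2 : Q (w i.castSucc + w (Fin.last r)) = 0 :=
      hiso _ (W.add_mem (hwW _) (hwW _))
    rw [QuadraticMap.isOrtho_def, h1, h2, hQlast, add_zero]
  have hanti : ω' * e = ((-1 : k) ^ r) • (e * ω') := by
    have h := clifford_aux_anticomm Q (w (Fin.last r)) L hortho
    rw [hLlen] at h
    rw [hω'']
    exact h
  have hωe : ω * e = 0 := by rw [hω, mul_assoc, hee, mul_zero]
  -- spans are ranges of mulRight
  have hset : ∀ a : CliffordAlgebra Q,
      Submodule.span k {y | ∃ x : CliffordAlgebra Q, y = x * a}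
        = LinearMap.range (LinearMap.mulRight k a) := by
    intro a
    rw [← Submodule.span_eq (LinearMap.range (LinearMap.mulRight k a))]
    congr 1
    ext y
    simp only [Set.mem_setOf_eq, SetLike.mem_coe, LinearMap.mem_range,
      LinearMap.mulRight_apply, eq_comm]
  rw [hset ω', hset ω]
  constructor
  · rw [← LinearMap.range_comp, ← LinearMap.mulRight_mul, ← hω]
  · -- construct the dual functional φ
    have hnot : w (Fin.last r) ∉
        Submodule.span k (Set.range fun i : Fin r => w i.castSucc) := by
      have hrange : (Set.range fun i : Fin r => w i.castSucc)
          = w '' Set.range (Fin.castSucc (n := r)) := by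
        rw [← Set.range_comp]; rfl
      rw [hrange]
      apply hli.notMem_span_image
      rintro ⟨j, hj⟩
      exact absurd hj (Fin.castSucc_lt_last j).ne
    obtain ⟨f, hf0, hfbot⟩ :=
      Submodule.exists_dual_map_eq_bot_of_notMem hnot inferInstance
    set φ : Module.Dual k V := (f (w (Fin.last r)))⁻¹ • f with hφ
    have hφlast : φ (w (Fin.last r)) = 1 := by
      rw [hφ]; exact inv_mul_cancel₀ hf0
    have hφL : ∀ u ∈ L, φ u = 0 := by
      intro u hu
      obtain ⟨i, rfl⟩ := hLmem u hu
      have hmem : w i.castSucc ∈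
          Submodule.span k (Set.range fun i : Fin r => w i.castSucc) :=
        Submodule.subset_span ⟨i, rfl⟩
      have : f (w i.castSucc) = 0 := by
        have : f (w i.castSucc) ∈ Submodule.map f
            (Submodule.span k (Set.range fun i : Fin r => w i.castSucc)) :=
          Submodule.mem_map_of_mem hmem
        rwa [hfbot, Submodule.mem_bot] at this
      simp [hφ, this]
    apply le_antisymm
    · rintro y ⟨hy1, hy2⟩
      obtain ⟨x, hx⟩ := hy1
      rw [LinearMap.mulRight_apply] at hx
      simp only [SetLike.mem_coe, LinearMap.mem_ker, LinearMap.mulRight_apply] at hy2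
      -- y = (y ⌊ φ) * e
      have hkey : contractRight (y * e) φ
          = φ (w (Fin.last r)) • y - contractRight y φ * e :=
        contractRight_mul_ι _ _ _
      rw [hy2, map_zero, LinearMap.zero_apply, hφlast, one_smul] at hkey
      have hy : y = contractRight y φ * e := by
        have := hkey.symm
        linear_combination (norm := module) this
      have hcontr : contractRight y φ
          = ((-1 : k) ^ r) • (contractRight x φ * ω') := by
        have h := clifford_aux_contract Q φ L hφL x
        rw [hLlen] at h
        rw [← hx, hω'']
        exact h
      refine ⟨((-1 : k) ^ r) • contractRight x φ, ?_⟩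
      rw [LinearMap.mulRight_apply, hω, smul_mul_assoc, ← mul_assoc,
        ← smul_mul_assoc, ← hcontr, ← hy]
    · rintro y ⟨x, rfl⟩
      rw [LinearMap.mulRight_apply]
      constructor
      · refine ⟨((-1 : k) ^ r) • (x * e), ?_⟩
        rw [LinearMap.mulRight_apply, smul_mul_assoc, mul_assoc, ← mul_smul_comm,
          ← hanti, hω]
      · simp only [SetLike.mem_coe, LinearMap.mem_ker, LinearMap.mulRight_apply]
        rw [mul_assoc, hωe, mul_zero]
end

section
/- Let W ⊆ V be an isotropic subspace of dimension r ≥ 1 and W' ⊂ W a subspace of dimension r−1. Choose a basis (w₁,…,w_r) of W such that (w₁,…,w_{r−1}) is a basis of W', and set ω' = ι(w₁)⋯ι(w_{r−1}) and ω = ι(w₁)⋯ι(w_r). Then left multiplication by ι(w_r) maps the right Clifford ideal ω'·Cl(q) onto ω·Cl(q) (note ι(w_r)·ω' = (−1)^{r−1}ω, since the ι(wᵢ) pairwise anticommute on an isotropic subspace), and its kernel on ω'·Cl(q) is exactly ω·Cl(q); that is, {x ∈ ω'·Cl(q) : ι(w_r)·x = 0} = ω·Cl(q). (This is the fiberwise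 form of the right-ideal version of Lemma 2.5.) -/
open CliffordAlgebra

private lemma aux_anticomm {k A : Type*} [CommRing k] [Ring A] [Algebra k A] (x : A) :
    ∀ (l : List A), (∀ a ∈ l, x * a = -(a * x)) →
      x * l.prod = ((-1 : k) ^ l.length) • (l.prod * x)
  | [], _ => by simp
  | a :: t, h => by
    have ih := aux_anticomm (k := k) x t (fun b hb => h b (List.mem_cons_of_mem a hb))
    simp only [List.prod_cons, List.length_cons]
    calc x * (a * t.prod) = (x * a) * t.prod := (mul_assoc _ _ _).symm
      _ = -(a * x) * t.prod := by rw [h a (List.mem_cons_self)]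
      _ = -(a * (x * t.prod)) := by rw [neg_mul, mul_assoc]
      _ = -(a * (((-1 : k) ^ t.length) • (t.prod * x))) := by rw [ih]
      _ = ((-1 : k) ^ (t.length + 1)) • (a * t.prod * x) := by
          rw [mul_smul_comm, pow_succ, mul_smul, neg_one_smul, smul_neg, mul_assoc]

private lemma aux_contract {k V : Type*} [CommRing k] [Invertible (2 : k)]
    [AddCommGroup V] [Module k V]
    {Q : QuadraticForm k V} (f : Module.Dual k V) :
    ∀ (l : List V), (∀ v ∈ l, f v = 0) → ∀ z : CliffordAlgebra Q,
      contractLeft f ((l.map (ι Q)).prod * z) =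
        ((-1 : k) ^ l.length) • ((l.map (ι Q)).prod * contractLeft f z)
  | [], _, z => by simp
  | v :: t, h, z => by
    have ih := aux_contract f t (fun b hb => h b (List.mem_cons_of_mem v hb)) z
    simp only [List.map_cons, List.prod_cons, List.length_cons]
    rw [mul_assoc, contractLeft_ι_mul, h v (List.mem_cons_self), zero_smul, zero_sub,
      ih, mul_smul_comm, pow_succ, mul_smul, neg_one_smul, smul_neg, mul_assoc]

private lemma aux_span_eq_range {k A : Type*} [CommRing k] [Ring A] [Algebra k A] (a : A) :
    Submodule.span k {y | ∃ x : A, y = a * x} = LinearMap.range (LinearMap.mulLeft k a) := by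
  have : {y | ∃ x : A, y = a * x} = Set.range (LinearMap.mulLeft k a) := by
    ext y
    exact ⟨fun ⟨x, h⟩ => ⟨x, h.symm⟩, fun ⟨x, h⟩ => ⟨x, h.symm⟩⟩
  rw [this, ← LinearMap.coe_range, Submodule.span_eq]

/-- Let `W` be an isotropic subspace with basis `w₁, …, w_{r+1}` and let
`W'` be the span of `w₁, …, w_r`. With `ω' = ι w₁ ⋯ ι w_r` and
`ω = ι w₁ ⋯ ι w_{r+1} = ω' · ι w_{r+1}`, one has `ι w_{r+1} · ω' = (−1)^r ω`, left
multiplication by `ι w_{r+1}` maps the right Clifford ideal `ω'·Cl(q)` onto `ω·Cl(q)`,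
and its kernel on `ω'·Cl(q)` is exactly `ω·Cl(q)`. -/
theorem clifford_right_ideal_ses_of_corank_one
    {k V : Type*} [Field k] [Invertible (2 : k)]
    [AddCommGroup V] [Module k V] [FiniteDimensional k V]
    (Q : QuadraticForm k V) (W W' : Submodule k V)
    (hiso : ∀ v ∈ W, Q v = 0)
    (r : ℕ) (w : Fin (r + 1) → V)
    (hli : LinearIndependent k w)
    (hspan : Submodule.span k (Set.range w) = W)
    (hspan' : Submodule.span k (Set.range fun i : Fin r => w i.castSucc) = W')
    (ω' ω : CliffordAlgebra Q)
    (hω' : ω' = (List.ofFn fun i : Fin r => ι Q (w i.castSucc)).prod)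
    (hω : ω = ω' * ι Q (w (Fin.last r))) :
    ι Q (w (Fin.last r)) * ω' = ((-1 : k) ^ r) • ω ∧
    Submodule.map (LinearMap.mulLeft k (ι Q (w (Fin.last r))))
        (Submodule.span k {y | ∃ x : CliffordAlgebra Q, y = ω' * x}) =
      Submodule.span k {y | ∃ x : CliffordAlgebra Q, y = ω * x} ∧
    Submodule.span k {y | ∃ x : CliffordAlgebra Q, y = ω' * x} ⊓
        LinearMap.ker (LinearMap.mulLeft k (ι Q (w (Fin.last r)))) =
      Submodule.span k {y | ∃ x : CliffordAlgebra Q, y = ω * x} := by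
  set u : CliffordAlgebra Q := ι Q (w (Fin.last r)) with hu
  set l : List V := List.ofFn (fun i : Fin r => w i.castSucc) with hl
  have hlmap : (List.ofFn fun i : Fin r => ι Q (w i.castSucc)) = l.map (ι Q) := by
    rw [hl, List.map_ofFn]; rfl
  have hω'l : ω' = (l.map (ι Q)).prod := by rw [hω', hlmap]
  have hlen : l.length = r := by rw [hl, List.length_ofFn]
  -- every w i is in W
  have hwW : ∀ i : Fin (r + 1), w i ∈ W := fun i => by
    rw [← hspan]; exact Submodule.subset_span ⟨i, rfl⟩
  -- anticommutation of isotropic vectors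
  have hanti : ∀ a ∈ W, ∀ b ∈ W, ι Q a * ι Q b = -(ι Q b * ι Q a) := by
    intro a ha b hb
    have hpol : QuadraticMap.polar Q a b = 0 := by
      simp [QuadraticMap.polar, hiso _ ha, hiso _ hb, hiso _ (W.add_mem ha hb)]
    have h2 := ι_mul_ι_add_swap (Q := Q) a b
    rw [hpol, map_zero] at h2
    exact eq_neg_of_add_eq_zero_left h2
  have hmem_l : ∀ v ∈ l, ∃ i : Fin r, v = w i.castSucc := by
    intro v hv
    rw [hl, List.mem_ofFn] at hv
    obtain ⟨i, hi⟩ := hv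
    exact ⟨i, hi.symm⟩
  have hA : ∀ a ∈ l.map (ι Q), u * a = -(a * u) := by
    intro a ha
    rw [List.mem_map] at ha
    obtain ⟨v, hv, rfl⟩ := ha
    obtain ⟨i, rfl⟩ := hmem_l v hv
    exact hanti _ (hwW _) _ (hwW _)
  -- Part 1
  have h1 : u * ω' = ((-1 : k) ^ r) • ω := by
    rw [hω'l, aux_anticomm (k := k) u _ hA, List.length_map, hlen, hω, hω'l]
  -- u * u = 0
  have huu : u * u = 0 := by
    rw [hu, ι_sq_scalar, hiso _ (hwW (Fin.last r)), map_zero]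
  -- (-1)^r * (-1)^r = 1
  have hc : ((-1 : k) ^ r) * ((-1 : k) ^ r) = 1 := by
    rw [← pow_add, ← two_mul, pow_mul, neg_one_sq, one_pow]
  -- u * ω = 0
  have huω : u * ω = 0 := by
    rw [hω, ← mul_assoc, h1, hω, smul_mul_assoc, mul_assoc, huu, mul_zero, smul_zero]
  -- Part 2
  have h2 : Submodule.map (LinearMap.mulLeft k u)
      (Submodule.span k {y | ∃ x : CliffordAlgebra Q, y = ω' * x}) =
      Submodule.span k {y | ∃ x : CliffordAlgebra Q, y = ω * x} := by
    rw [aux_span_eq_range, aux_span_eq_range, ← LinearMap.range_comp, ← LinearMap.mulLeft_mul]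
    ext x
    simp only [LinearMap.mem_range, LinearMap.mulLeft_apply]
    constructor
    · rintro ⟨z, rfl⟩
      refine ⟨((-1 : k) ^ r) • z, ?_⟩
      calc ω * (((-1 : k) ^ r) • z) = ((-1 : k) ^ r) • (ω * z) := mul_smul_comm _ _ _
        _ = (((-1 : k) ^ r) • ω) * z := (smul_mul_assoc _ _ _).symm
        _ = (u * ω') * z := by rw [h1]
    · rintro ⟨z, rfl⟩
      refine ⟨((-1 : k) ^ r) • z, ?_⟩
      calc (u * ω') * (((-1 : k) ^ r) • z)
          = (((-1 : k) ^ r) • ω) * (((-1 : k) ^ r) • z) := by rw [h1]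
        _ = ((-1 : k) ^ r) • ((-1 : k) ^ r) • (ω * z) := by
            rw [smul_mul_assoc, mul_smul_comm]
        _ = ω * z := by rw [smul_smul, hc, one_smul]
  refine ⟨h1, h2, ?_⟩
  -- dual functional
  obtain ⟨f, hf0, hf1⟩ : ∃ f : Module.Dual k V,
      (∀ i : Fin r, f (w i.castSucc) = 0) ∧ f (w (Fin.last r)) = 1 := by
    let b := Module.Basis.span hli
    obtain ⟨g, hg⟩ := LinearMap.exists_extend (b.coord (Fin.last r))
    have hgw : ∀ i : Fin (r + 1), g (w i) = b.coord (Fin.last r) (b i) := by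
      intro i
      have hmem : w i ∈ Submodule.span k (Set.range w) := Submodule.subset_span ⟨i, rfl⟩
      have : b i = ⟨w i, hmem⟩ := Module.Basis.span_apply hli i
      calc g (w i) = (g ∘ₗ (Submodule.span k (Set.range w)).subtype) ⟨w i, hmem⟩ := rfl
        _ = b.coord (Fin.last r) ⟨w i, hmem⟩ := by rw [hg]
        _ = b.coord (Fin.last r) (b i) := by rw [this]
    refine ⟨g, fun i => ?_, ?_⟩
    · rw [hgw, Module.Basis.coord_apply, Module.Basis.repr_self, Finsupp.single_apply,
        if_neg (Fin.castSucc_lt_last i).ne]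
    · rw [hgw, Module.Basis.coord_apply, Module.Basis.repr_self, Finsupp.single_apply, if_pos rfl]
  have hfl : ∀ v ∈ l, f v = 0 := by
    intro v hv
    obtain ⟨i, rfl⟩ := hmem_l v hv
    exact hf0 i
  -- Part 3
  rw [aux_span_eq_range, aux_span_eq_range]
  ext x
  simp only [Submodule.mem_inf, LinearMap.mem_range, LinearMap.mem_ker, LinearMap.mulLeft_apply]
  constructor
  · rintro ⟨⟨z, rfl⟩, hker⟩
    -- x = ω' * z, u * x = 0
    have hdx : contractLeft f (ω' * z) = ((-1 : k) ^ r) • (ω' * contractLeft f z) := by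
      rw [hω'l]
      have h3 := aux_contract f l hfl z
      rw [hlen] at h3
      exact h3
    have hkey := contractLeft_ι_mul (Q := Q) (d := f) (w (Fin.last r)) (ω' * z)
    rw [← hu, hker, map_zero, hf1, one_smul] at hkey
    have hx : ω' * z = u * contractLeft f (ω' * z) := sub_eq_zero.mp hkey.symm
    refine ⟨contractLeft f z, ?_⟩
    calc ω * contractLeft f z
        = ((-1 : k) ^ r) • ((-1 : k) ^ r) • (ω * contractLeft f z) := by
          rw [smul_smul, hc, one_smul]
      _ = ((-1 : k) ^ r) • ((((-1 : k) ^ r) • ω) * contractLeft f z) := by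
          rw [smul_mul_assoc]
      _ = ((-1 : k) ^ r) • ((u * ω') * contractLeft f z) := by rw [h1]
      _ = u * (((-1 : k) ^ r) • (ω' * contractLeft f z)) := by
          rw [mul_smul_comm, mul_assoc]
      _ = u * contractLeft f (ω' * z) := by rw [hdx]
      _ = ω' * z := hx.symm
  · rintro ⟨z, rfl⟩
    refine ⟨⟨u * z, by rw [hω, mul_assoc]⟩, ?_⟩
    rw [← mul_assoc, huω, zero_mul]
end

section
/- Suppose q is not identically zero. Then for all i, j ∈ ℤ/2, the k-linear span of the set of products {x·y : x ∈ Cl(q)ᵢ, y ∈ Cl(q)ⱼ} equals Cl(q)_{i+j}. In particular, the even Clifford algebra Cl(q)₀ is spanned by products of pairs of odd elements. (This is the fiberwise form of the statement that for a primitive quadratic form the Clifford multiplication maps B_n ⊗_{B₀} B_m → B_{n+m} are isomorphisms, so that B₁ is an invertible B₀-bimodule.) -/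
open CliffordAlgebra

/-- If `q` is not identically zero, then for all `i, j ∈ ℤ/2` the
`k`-linear span of the products `{x·y : x ∈ Cl(q)ᵢ, y ∈ Cl(q)ⱼ}` is all of
`Cl(q)_{i+j}`; in particular the even Clifford algebra is spanned by products of pairs
of odd elements. -/
theorem clifford_evenOdd_mul_span
    {k V : Type*} [Field k] [Invertible (2 : k)]
    [AddCommGroup V] [Module k V] [FiniteDimensional k V]
    (Q : QuadraticForm k V) (hQ : Q ≠ 0) :
    ∀ i j : ZMod 2,
      Submodule.span k
          {z : CliffordAlgebra Q |
            ∃ x ∈ evenOdd Q i, ∃ y ∈ evenOdd Q j, z = x * y} =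
        evenOdd Q (i + j) := by
  obtain ⟨v, hv⟩ : ∃ v, Q v ≠ 0 := by
    by_contra h
    push_neg at h
    exact hQ (QuadraticMap.ext fun v => by simp [h v])
  intro i j
  apply le_antisymm
  · rw [Submodule.span_le]
    rintro z ⟨x, hx, y, hy, rfl⟩
    exact evenOdd_mul_le Q i j (Submodule.mul_mem_mul hx hy)
  · intro z hz
    have key : ∀ (a b : CliffordAlgebra Q), a ∈ evenOdd Q i → b ∈ evenOdd Q j →
        a * b ∈ Submodule.span k {z : CliffordAlgebra Q |
          ∃ x ∈ evenOdd Q i, ∃ y ∈ evenOdd Q j, z = x * y} :=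
      fun a b ha hb => Submodule.subset_span ⟨a, ha, b, hb, rfl⟩
    have h1 : (1 : CliffordAlgebra Q) ∈ evenOdd Q 0 :=
      Submodule.one_le.mp (one_le_evenOdd_zero Q)
    fin_cases i <;> fin_cases j
    · have := key 1 z h1 (by exact hz)
      simpa using this
    · have := key 1 z h1 (by exact hz)
      simpa using this
    · have := key z 1 (by exact hz) h1
      simpa using this
    · -- i = j = 1, hz : z ∈ evenOdd Q (1 + 1) = evenOdd Q 0
      have hz0 : z ∈ evenOdd Q 0 := by exact hz
      have hιv : ι Q v ∈ evenOdd Q 1 := ι_mem_evenOdd_one Q v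
      have hvz : ι Q v * z ∈ evenOdd Q 1 := by
        simpa using SetLike.mul_mem_graded (A := evenOdd Q) hιv hz0
      have hmem := key (ι Q v) (ι Q v * z) hιv hvz
      have heq : (Q v)⁻¹ • (ι Q v * (ι Q v * z)) = z := by
        rw [← mul_assoc, ι_sq_scalar, ← Algebra.smul_def, smul_smul,
          inv_mul_cancel₀ hv, one_smul]
      have := Submodule.smul_mem _ ((Q v)⁻¹) hmem
      rw [heq] at this
      exact this
end
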